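/- The group with presentation ⟨ζ, η ∣ ηζη⁻¹ζη = 1⟩ is not isomorphic to the infinite cyclic group ℤ. -/
import Mathlib


/-- The generator ζ of the free group on two generators. -/
def zeta : FreeGroup (Fin 2) := FreeGroup.of 0

/-- The generator η of the free group on two generators. -/
def eta : FreeGroup (Fin 2) := FreeGroup.of 1

/-- The single relator `ηζη⁻¹ζη` of the presentation `⟨ζ, η ∣ ηζη⁻¹ζη = 1⟩`. -/
def trigonRels : Set (FreeGroup (Fin 2)) := {eta * zeta * eta⁻¹ * zeta * eta}

/-- A transposition in `S₃`. -/
def permA : Equiv.Perm (Fin 3) := Equiv.swap 0 1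

/-- A 3-cycle in `S₃`. -/
def permB : Equiv.Perm (Fin 3) := Equiv.swap 0 1 * Equiv.swap 1 2

/-- The assignment of generators. -/
def genMap : Fin 2 → Equiv.Perm (Fin 3) := fun i => if i = 0 then permA else permB

theorem trigon_rels_hold : ∀ r ∈ trigonRels, FreeGroup.lift genMap r = 1 := by
  intro r hr
  simp only [trigonRels, Set.mem_singleton_iff] at hr
  subst hr
  simp only [map_mul, map_inv, FreeGroup.lift_apply_of, zeta, eta, genMap]
  decide

/-- The group `⟨ζ, η ∣ ηζη⁻¹ζη = 1⟩` is not isomorphic to the infinite cyclic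
group `ℤ`. -/
theorem trigon_group_not_iso_int :
    ¬ Nonempty (PresentedGroup trigonRels ≃* Multiplicative ℤ) := by
  rintro ⟨e⟩
  have hcomm : ∀ x y : PresentedGroup trigonRels, x * y = y * x := fun x y =>
    e.injective (by simp [mul_comm])
  have h := hcomm (PresentedGroup.of 0) (PresentedGroup.of 1)
  have h2 := congrArg (PresentedGroup.toGroup trigon_rels_hold) h
  simp only [map_mul, PresentedGroup.toGroup.of, genMap] at h2
  norm_num at h2
  exact absurd h2 (by decide)
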